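/- Let p < q be prime numbers and let b, c be natural numbers satisfying p²·q = q + b·p² + c·q². Then p = 2, q = 3, b = 0, and c = 1. -/
import Mathlib


theorem stmt_7 (p q : ℕ) (hp : p.Prime) (hq : q.Prime) (hpq : p < q)
    (b c : ℕ) (h : p ^ 2 * q = q + b * p ^ 2 + c * q ^ 2) :
    p = 2 ∧ q = 3 ∧ b = 0 ∧ c = 1 := by
  have hp2 : 2 ≤ p := hp.two_le
  have hq0 : 0 < q := hq.pos
  -- q ∣ b * p^2
  have hdvd : q ∣ b * p ^ 2 := by
    have h1 : q ∣ q + b * p ^ 2 + c * q ^ 2 := h ▸ ⟨p ^ 2, by ring⟩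
    have h3 : q + b * p ^ 2 + c * q ^ 2 = (q + c * q ^ 2) + b * p ^ 2 := by ring
    rw [h3] at h1
    exact (Nat.dvd_add_right ⟨1 + c * q, by ring⟩).mp h1
  have hqb : q ∣ b := by
    have hcop : Nat.Coprime q (p ^ 2) :=
      (Nat.coprime_primes hq hp).2 (by omega) |>.pow_right 2
    exact (Nat.Coprime.dvd_of_dvd_mul_right hcop hdvd)
  -- b = 0
  have hb : b = 0 := by
    by_contra hb0
    have hbq : q ≤ b := Nat.le_of_dvd (Nat.pos_of_ne_zero hb0) hqb
    have : q * p ^ 2 ≤ b * p ^ 2 := Nat.mul_le_mul_right _ hbq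
    nlinarith
  subst hb
  -- p^2 = 1 + c*q
  have hpc : p ^ 2 = 1 + c * q := by
    have : q * p ^ 2 = q * (1 + c * q) := by ring_nf; ring_nf at h; linarith
    exact Nat.eq_of_mul_eq_mul_left hq0 this
  have hcq : c * q = p ^ 2 - 1 := by omega
  have hqd : q ∣ (p - 1) * (p + 1) := by
    have : (p - 1) * (p + 1) = c * q := by
      have : (p - 1) * (p + 1) = p ^ 2 - 1 := by
        have : 1 ≤ p := by omega
        cases p with
        | zero => omega
        | succ n =>
          have e1 : (n + 1) ^ 2 = n ^ 2 + 2 * n + 1 := by ring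
          have e2 : (n + 1 - 1) * (n + 1 + 1) = n ^ 2 + 2 * n := by
            simp; ring
          omega
      omega
    exact ⟨c, by rw [this, mul_comm]⟩
  have := (Nat.Prime.dvd_mul hq).1 hqd
  have hqp1 : q = p + 1 := by
    rcases this with h1 | h2
    · have := Nat.le_of_dvd (by omega) h1
      omega
    · have := Nat.le_of_dvd (by omega) h2
      omega
  have hp2' : p = 2 := by
    rcases Nat.even_or_odd p with he | ho
    · exact (Nat.Prime.even_iff hp).1 he
    · have : Even q := by rw [hqp1]; exact ho.add_one
      have := (Nat.Prime.even_iff hq).1 this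
      omega
  subst hp2'
  have hq3 : q = 3 := by omega
  subst hq3
  refine ⟨rfl, rfl, rfl, by omega⟩
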